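/- Let G be a group and P a submonoid of G with identity e. Let B be a unital C*-algebra with 1 ≠ 0, and let w : P → B satisfy w_e = 1, (w_p)* w_p = 1 and w_p w_q = w_{pq} for all p, q ∈ P. Suppose there exists a positive, norm-contractive linear map E : B → B such that for every k ≥ 1 and all p₁, …, p_{2k} ∈ P: E(w_{p₁}(w_{p₂})* w_{p₃}(w_{p₄})* ⋯ w_{p_{2k-1}}(w_{p_{2k}})*) equals w_{p₁}(w_{p₂})* ⋯ w_{p_{2k-1}}(w_{p_{2k}})* if p₁p₂⁻¹p₃p₄⁻¹⋯p_{2k-1}p_{2k}⁻¹ = e in G, and equals 0 otherwise. Then for every finitely supported function c : P → ℂ one has ‖Σ_{p} c_p L_p‖_{B(ℓ²(P))} ≤ ‖Σ_{p} c_p w_p‖_B, where L_p is the isometry of ℓ²(P) determined by L_p δ_q = δ_{pq}. -/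

import Mathlib

lemma stmt9_single {P : Type*} [DecidableEq P] (x y : P) :
    (lp.single 2 y (1:ℂ) : ∀ _ : P, ℂ) x = if x = y then 1 else 0 := by
  rw [lp.single_apply]
  split_ifs with h
  · subst h; simp
  · simp [h]

lemma stmt9_auxE {B : Type*} [NormedRing B] [StarRing B] [NormedAlgebra ℂ B] [StarModule ℂ B]
    {P : Type*} [DecidableEq P] (w : P → B) (E : B →ₗ[ℂ] B)
    (key : ∀ x y : P, E (star (w x) * w y) = if x = y then (1:B) else 0)
    {ι : Type*} (r : Finset ι) (u : ι → ℂ) (v : ι → P) :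
    E (star (∑ i ∈ r, u i • w (v i)) * ∑ j ∈ r, u j • w (v j))
      = (∑ i ∈ r, ∑ j ∈ r, (starRingEnd ℂ) (u i) * u j * (if v i = v j then 1 else 0)) • (1:B) := by
  have h : star (∑ i ∈ r, u i • w (v i)) * ∑ j ∈ r, u j • w (v j)
      = ∑ i ∈ r, ∑ j ∈ r, ((starRingEnd ℂ) (u i) * u j) • (star (w (v i)) * w (v j)) := by
    rw [star_sum, Finset.sum_mul_sum]
    refine Finset.sum_congr rfl fun i _ => Finset.sum_congr rfl fun j _ => ?_
    rw [star_smul, smul_mul_smul_comm]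
    rfl
  rw [h, map_sum]
  simp only [map_sum, map_smul, key]
  rw [Finset.sum_smul]
  refine Finset.sum_congr rfl fun i _ => ?_
  rw [Finset.sum_smul]
  refine Finset.sum_congr rfl fun j _ => ?_
  split_ifs <;> simp

lemma stmt9_auxI {P : Type*} [DecidableEq P] {ι : Type*} (r : Finset ι) (u : ι → ℂ) (v : ι → P) :
    @inner ℂ _ _ ((∑ i ∈ r, u i • lp.single 2 (v i) (1:ℂ)) : lp (fun _ : P => ℂ) 2)
        (∑ j ∈ r, u j • lp.single 2 (v j) 1)
      = ∑ i ∈ r, ∑ j ∈ r, (starRingEnd ℂ) (u i) * u j * (if v i = v j then 1 else 0) := by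
  rw [sum_inner]
  refine Finset.sum_congr rfl fun i _ => ?_
  rw [inner_sum]
  refine Finset.sum_congr rfl fun j _ => ?_
  rw [inner_smul_left, inner_smul_right, lp.inner_single_left]
  rw [stmt9_single (v i) (v j)]
  simp [RCLike.inner_apply, mul_assoc]

/-- Let `G` be a group, `P` a submonoid of `G` with identity `e`, `B` a unital
C*-algebra with `1 ≠ 0`, and `w : P → B` an isometric representation of `P` (`w_e = 1`,
`w_p* w_p = 1`, `w_p w_q = w_{pq}`).  Suppose there is a positive norm-contractive linear map
`E : B → B` fixing each alternating product `w_{p₁} w_{p₂}* ⋯ w_{p_{2k-1}} w_{p_{2k}}*`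
whose iterated right quotient `p₁p₂⁻¹⋯p_{2k-1}p_{2k}⁻¹` is `e`, and annihilating it otherwise.
Then `‖Σ_p c_p L_p‖ ≤ ‖Σ_p c_p w_p‖` for every finitely supported `c : P → ℂ`, where `L_p` is
the isometry of `ℓ²(P)` determined by `L_p δ_q = δ_{pq}`. -/
theorem stmt_9 {G : Type*} [Group G] [DecidableEq G] (P : Submonoid G)
    {B : Type*} [NormedRing B] [StarRing B] [CStarRing B] [NormedAlgebra ℂ B]
    [CompleteSpace B] [StarModule ℂ B] [PartialOrder B] [StarOrderedRing B] [Nontrivial B]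
    (w : P → B) (hw_e : w 1 = 1) (hw_isom : ∀ p : P, star (w p) * w p = 1)
    (hw_mul : ∀ p q : P, w p * w q = w (p * q))
    (E : B →ₗ[ℂ] B) (hE_pos : ∀ b : B, 0 ≤ b → 0 ≤ E b) (hE_contr : ∀ b : B, ‖E b‖ ≤ ‖b‖)
    (hE : ∀ k : ℕ, 1 ≤ k → ∀ p : ℕ → P,
      E (((List.range k).map fun i => w (p (2 * i + 1)) * star (w (p (2 * i + 2)))).prod) =
        if ((List.range k).map fun i =>
              (p (2 * i + 1) : G) * ((p (2 * i + 2) : G))⁻¹).prod = 1 then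
          ((List.range k).map fun i => w (p (2 * i + 1)) * star (w (p (2 * i + 2)))).prod
        else 0)
    (L : P → (lp (fun _ : P => ℂ) 2 →L[ℂ] lp (fun _ : P => ℂ) 2))
    (hL : ∀ p q : P, L p (lp.single 2 q 1) = lp.single 2 (p * q) 1)
    (c : P →₀ ℂ) :
    ‖∑ p ∈ c.support, c p • L p‖ ≤ ‖∑ p ∈ c.support, c p • w p‖ := by
  classical
  letI : CStarAlgebra B := {}
  set a : B := ∑ p ∈ c.support, c p • w p with ha
  set T : lp (fun _ : P => ℂ) 2 →L[ℂ] lp (fun _ : P => ℂ) 2 :=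
    ∑ p ∈ c.support, c p • L p with hT
  -- the key consequence of hE
  have key : ∀ x y : P, E (star (w x) * w y) = if x = y then (1:B) else 0 := by
    intro x y
    have h := hE 2 (by norm_num) (fun n => if n = 2 then x else if n = 3 then y else 1)
    simp only [List.range_succ, List.range_zero, List.map_append, List.map_cons, List.map_nil,
      List.prod_append, List.prod_cons, List.prod_nil] at h
    norm_num [hw_e] at h
    have hcond : ((x:G)⁻¹ * (y:G) = 1) ↔ x = y := by
      rw [inv_mul_eq_one, Subtype.coe_inj]
    rw [if_congr hcond rfl rfl] at h
    rw [h]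
    split_ifs with hxy
    · subst hxy; exact hw_isom x
    · rfl
  -- scalar comparison in B
  have hscal : ∀ r t : ℝ, ((r:ℂ) • (1:B) ≤ (t:ℂ) • 1) → r ≤ t := by
    intro r t h
    by_contra hlt
    push_neg at hlt
    have hd : (0:ℝ) < r - t := by linarith
    have h0 : ((t - r : ℝ):ℂ) • (1:B) = ((t:ℂ) • 1 - (r:ℂ) • 1) := by
      push_cast
      rw [sub_smul]
    have hpos : (0:B) ≤ ((t - r : ℝ):ℂ) • 1 := by
      rw [h0]; exact sub_nonneg.2 h
    have hneg : (0:B) ≤ ((r - t : ℝ):ℂ) • 1 := by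
      have hsq : ((r - t : ℝ):ℂ) • (1:B)
          = star (((Real.sqrt (r - t) : ℝ):ℂ) • (1:B)) * (((Real.sqrt (r - t) : ℝ):ℂ) • 1) := by
        rw [star_smul, star_one, smul_mul_smul_comm, one_mul]
        congr 1
        rw [Complex.star_def, Complex.conj_ofReal, ← Complex.ofReal_mul,
          Real.mul_self_sqrt hd.le]
      rw [hsq]
      exact star_mul_self_nonneg _
    have hzero : ((r - t : ℝ):ℂ) • (1:B) = 0 := by
      refine le_antisymm ?_ hneg
      have : ((r - t : ℝ):ℂ) • (1:B) = -(((t - r : ℝ):ℂ) • (1:B)) := by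
        rw [← neg_smul]
        congr 1
        push_cast
        ring
      rw [this]
      exact neg_nonpos_of_nonneg hpos
    have hne : ((r - t : ℝ):ℂ) ≠ 0 := by
      exact Complex.ofReal_ne_zero.2 hd.ne'
    have : (1:B) = 0 := by
      calc (1:B) = ((r - t : ℝ):ℂ)⁻¹ • (((r - t : ℝ):ℂ) • (1:B)) := by
            rw [smul_smul, inv_mul_cancel₀ hne, one_smul]
        _ = 0 := by rw [hzero, smul_zero]
    exact one_ne_zero this
  -- the core estimate on finitely supported vectors
  have core : ∀ (s : Finset P) (f : P → ℂ),
      ‖T (∑ q ∈ s, f q • lp.single 2 q 1)‖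
        ≤ ‖a‖ * ‖(∑ q ∈ s, f q • lp.single 2 q 1 : lp (fun _ : P => ℂ) 2)‖ := by
    intro s f
    set ξ : lp (fun _ : P => ℂ) 2 := ∑ q ∈ s, f q • lp.single 2 q 1 with hξ
    set m : B := ∑ q ∈ s, f q • w q with hm
    -- first identity
    have hmm : E (star m * m) = ((‖ξ‖ : ℂ))^2 • 1 := by
      have h1 := stmt9_auxE w E key s f (fun q => q)
      have h2 := stmt9_auxI (P := P) s f (fun q => q)
      rw [inner_self_eq_norm_sq_to_K] at h2
      rw [hm, h1, ← h2]
      rfl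
    -- second identity
    have hn : a * m = ∑ pq ∈ c.support ×ˢ s, (c pq.1 * f pq.2) • w (pq.1 * pq.2) := by
      rw [ha, hm, Finset.sum_mul_sum, Finset.sum_product]
      refine Finset.sum_congr rfl fun p _ => Finset.sum_congr rfl fun q _ => ?_
      rw [smul_mul_smul_comm, hw_mul]
    have hTξ : T ξ = ∑ pq ∈ c.support ×ˢ s,
        (c pq.1 * f pq.2) • (lp.single 2 (pq.1 * pq.2) 1 : lp (fun _ : P => ℂ) 2) := by
      rw [Finset.sum_product, hT, hξ]
      rw [ContinuousLinearMap.sum_apply]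
      refine Finset.sum_congr rfl fun p _ => ?_
      rw [ContinuousLinearMap.smul_apply, map_sum, Finset.smul_sum]
      refine Finset.sum_congr rfl fun q _ => ?_
      rw [map_smul, hL, smul_smul]
    have hnn : E (star (a * m) * (a * m)) = ((‖T ξ‖ : ℂ))^2 • 1 := by
      have h1 := stmt9_auxE w E key (c.support ×ˢ s) (fun pq => c pq.1 * f pq.2)
        (fun pq => pq.1 * pq.2)
      have h2 := stmt9_auxI (P := P) (c.support ×ˢ s) (fun pq => c pq.1 * f pq.2)
        (fun pq => pq.1 * pq.2)
      rw [inner_self_eq_norm_sq_to_K] at h2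
      rw [hn, h1, ← h2, ← hTξ]
      rfl
    -- the operator inequality
    have hle : star (a * m) * (a * m) ≤ ((‖a‖^2 : ℝ) : ℂ) • (star m * m) := by
      have h1 : star a * a ≤ algebraMap ℝ B (‖a‖^2) :=
        CStarAlgebra.star_mul_le_algebraMap_norm_sq
      have h2 := star_left_conjugate_le_conjugate h1 m
      have e1 : star (a * m) * (a * m) = star m * (star a * a) * m := by
        rw [star_mul]
        noncomm_ring
      have e2 : star m * algebraMap ℝ B (‖a‖^2) * m = ((‖a‖^2 : ℝ) : ℂ) • (star m * m) := by
        rw [IsScalarTower.algebraMap_apply ℝ ℂ B, Complex.coe_algebraMap,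
          Algebra.algebraMap_eq_smul_one, mul_smul_comm, smul_mul_assoc, mul_one]
      rw [e1, ← e2]
      exact h2
    have hEle : E (star (a * m) * (a * m)) ≤ ((‖a‖^2 : ℝ) : ℂ) • E (star m * m) := by
      have hdiff := hE_pos _ (sub_nonneg.2 hle)
      rw [map_sub, map_smul] at hdiff
      exact sub_nonneg.1 hdiff
    rw [hnn, hmm, smul_smul] at hEle
    have hsc : (‖T ξ‖^2 : ℝ) ≤ ‖a‖^2 * ‖ξ‖^2 := by
      apply hscal
      convert hEle using 2 <;> push_cast <;> ring
    have : ‖T ξ‖^2 ≤ (‖a‖ * ‖ξ‖)^2 := by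
      rw [mul_pow]; exact hsc
    exact le_of_pow_le_pow_left₀ two_ne_zero (mul_nonneg (norm_nonneg _) (norm_nonneg _)) this
  -- conclude by density
  refine ContinuousLinearMap.opNorm_le_bound _ (norm_nonneg a) ?_
  intro ξ
  have hsum : HasSum (fun q : P => (ξ : ∀ _ : P, ℂ) q • (lp.single 2 q 1 : lp (fun _ : P => ℂ) 2))
      ξ := by
    have h := lp.hasSum_single (by norm_num : (2:ENNReal) ≠ ⊤) ξ
    convert h using 2 with q
    rw [← lp.single_smul, smul_eq_mul, mul_one]
  have ht : Filter.Tendsto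
      (fun s : Finset P => ∑ q ∈ s, (ξ : ∀ _ : P, ℂ) q • (lp.single 2 q 1 : lp (fun _ : P => ℂ) 2))
      Filter.atTop (nhds ξ) := hsum
  exact le_of_tendsto_of_tendsto' ((T.continuous.tendsto ξ).comp ht).norm
    (ht.norm.const_mul ‖a‖) (fun s => core s _)
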